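/- arXiv:math/0003017 — 2 statements merged into one kernel-verified Lean document; each statement's English description precedes it below -/
import Mathlib

section
/- Let N = 2M+1 be odd and q = e^{2πi/N}. Then ∑_{j=0}^{N-1} q^{j²} = q^{L²} · ∏_{j=1}^{M}(1 - q^j), where L is an integer with 2L ≡ M (mod N). -/
open Finset

/-- Gaussian binomial coefficient via the q-Pascal recurrence. -/
noncomputable def gb (q : ℂ) : ℕ → ℕ → ℂ
  | _, 0 => 1
  | 0, _ + 1 => 0
  | n + 1, k + 1 => gb q n k + q ^ (k + 1) * gb q n (k + 1)

lemma gb_zero_right (q : ℂ) (n : ℕ) : gb q n 0 = 1 := by cases n <;> rfl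

lemma gb_succ_succ (q : ℂ) (n k : ℕ) :
    gb q (n + 1) (k + 1) = gb q n k + q ^ (k + 1) * gb q n (k + 1) := rfl

lemma gb_eq_zero (q : ℂ) : ∀ n k, n < k → gb q n k = 0 := by
  intro n
  induction n with
  | zero => intro k hk; match k, hk with | k + 1, _ => rfl
  | succ n ih =>
    intro k hk
    match k, hk with
    | k + 1, hk =>
      rw [gb_succ_succ, ih k (by omega), ih (k+1) (by omega)]
      ring

lemma gb_diag (q : ℂ) (n : ℕ) : gb q n n = 1 := by
  induction n with
  | zero => rfl
  | succ n ih => rw [gb_succ_succ, ih, gb_eq_zero q n (n+1) (by omega)]; ring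

lemma gb_one (q : ℂ) (n : ℕ) : gb q n 1 = ∑ i ∈ range n, q ^ i := by
  induction n with
  | zero => simp [gb_eq_zero q 0 1 (by omega)]
  | succ n ih =>
    rw [gb_succ_succ, gb_zero_right, ih, geom_sum_succ]
    ring

lemma gb_one_mul (q : ℂ) (n : ℕ) : gb q n 1 * (q - 1) = q ^ n - 1 := by
  rw [gb_one, geom_sum_mul]

lemma gb_pascal2 (q : ℂ) : ∀ n k, gb q (n+1) (k+1) = q ^ (n-k) * gb q n k + gb q n (k+1) := by
  intro n
  induction n with
  | zero =>
    intro k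
    match k with
    | 0 => simp [gb_succ_succ, gb_zero_right, gb_eq_zero q 0 1 (by omega), gb_diag]
    | k + 1 => simp [gb_succ_succ, gb_eq_zero q 0 (k+1) (by omega), gb_eq_zero q 0 (k+2) (by omega),
        gb_eq_zero q 1 (k+2) (by omega)]
  | succ n ih =>
    intro k
    match k with
    | 0 =>
      rw [gb_succ_succ, gb_zero_right, Nat.sub_zero]
      have h := gb_one_mul q (n+1)
      simp only [zero_add, pow_one] at *
      linear_combination h
    | j + 1 =>
      have e1 : gb q (n+2) (j+2) = gb q (n+1) (j+1) + q^(j+2) * gb q (n+1) (j+2) := gb_succ_succ q (n+1) (j+1)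
      have e2 : gb q (n+1) (j+1) = gb q n j + q^(j+1) * gb q n (j+1) := gb_succ_succ q n j
      have e3 : gb q (n+1) (j+2) = gb q n (j+1) + q^(j+2) * gb q n (j+2) := gb_succ_succ q n (j+1)
      have i1 : gb q (n+1) (j+1) = q ^ (n-j) * gb q n j + gb q n (j+1) := ih j
      have i2 : gb q (n+1) (j+2) = q ^ (n-(j+1)) * gb q n (j+1) + gb q n (j+2) := ih (j+1)
      have hnj : n + 1 - (j+1) = n - j := by omega
      rw [hnj]
      by_cases hj : j + 1 <= n
      · have hpow : q ^ (j+2) * q ^ (n - (j+1)) = q ^ (n - j) * q ^ (j+1) := by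
          rw [← pow_add, ← pow_add]; congr 1; omega
        linear_combination e1 + i1 - q^(n-j)*e2 + q^(j+2)*i2 - e3 + gb q n (j+1) * hpow
      · by_cases hj2 : j = n
        · subst hj2
          rw [gb_diag, gb_diag, gb_eq_zero q (j+1) (j+2) (by omega), Nat.sub_self]
          ring
        · rw [gb_eq_zero q (n+2) (j+2) (by omega), gb_eq_zero q (n+1) (j+1) (by omega),
            gb_eq_zero q (n+1) (j+2) (by omega)]
          ring

noncomputable def gA (q : ℂ) (n : ℕ) : ℂ := ∑ k ∈ range (n+1), (-1 : ℂ)^k * gb q n k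
noncomputable def gB (q : ℂ) (n : ℕ) : ℂ := ∑ k ∈ range (n+1), (-1 : ℂ)^k * q^k * gb q n k

lemma gB_aux (q : ℂ) (n : ℕ) :
    ∑ j ∈ range (n+1), (-1:ℂ)^j * q^(j+1) * gb q n (j+1) = 1 - gB q n := by
  have h1 : gB q n = (∑ j ∈ range n, (-1:ℂ)^(j+1) * q^(j+1) * gb q n (j+1)) + 1 := by
    rw [gB, Finset.sum_range_succ']
    simp [gb_zero_right]
  have h2 : ∑ j ∈ range (n+1), (-1:ℂ)^j * q^(j+1) * gb q n (j+1)
      = ∑ j ∈ range n, (-1:ℂ)^j * q^(j+1) * gb q n (j+1) := by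
    rw [Finset.sum_range_succ, gb_eq_zero q n (n+1) (by omega)]
    ring
  rw [h2, h1]
  have : ∀ j ∈ range n, (-1:ℂ)^(j+1) * q^(j+1) * gb q n (j+1)
      = -((-1:ℂ)^j * q^(j+1) * gb q n (j+1)) := by intro j _; ring
  rw [Finset.sum_congr rfl this, Finset.sum_neg_distrib]
  ring

lemma recA (q : ℂ) (n : ℕ) : gA q (n+1) = gB q n - gA q n := by
  have expand : gA q (n+1) = (∑ j ∈ range (n+1), (-1:ℂ)^(j+1) * gb q (n+1) (j+1)) + 1 := by
    rw [gA, Finset.sum_range_succ']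
    simp [gb_zero_right]
  rw [expand]
  have : ∀ j ∈ range (n+1), (-1:ℂ)^(j+1) * gb q (n+1) (j+1)
      = -((-1:ℂ)^j * gb q n j) - (-1:ℂ)^j * q^(j+1) * gb q n (j+1) := by
    intro j _
    rw [gb_succ_succ]
    ring
  rw [Finset.sum_congr rfl this, Finset.sum_sub_distrib, Finset.sum_neg_distrib, gB_aux]
  rw [gA]
  ring

lemma recB (q : ℂ) (n : ℕ) : gB q (n+1) = gB q n - q^(n+1) * gA q n := by
  have expand : gB q (n+1) = (∑ j ∈ range (n+1), (-1:ℂ)^(j+1) * q^(j+1) * gb q (n+1) (j+1)) + 1 := by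
    rw [gB, Finset.sum_range_succ']
    simp [gb_zero_right]
  rw [expand]
  have : ∀ j ∈ range (n+1), (-1:ℂ)^(j+1) * q^(j+1) * gb q (n+1) (j+1)
      = -(q^(n+1) * ((-1:ℂ)^j * gb q n j)) - (-1:ℂ)^j * q^(j+1) * gb q n (j+1) := by
    intro j hj
    rw [gb_pascal2]
    have : q^(j+1) * q^(n-j) = q^(n+1) := by
      rw [← pow_add]; congr 1
      have := Finset.mem_range.mp hj
      omega
    linear_combination ((-1:ℂ)^(j+1) * gb q n j) * this
  rw [Finset.sum_congr rfl this, Finset.sum_sub_distrib, Finset.sum_neg_distrib, gB_aux,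
    ← Finset.mul_sum]
  rw [gA]
  ring

/-- Gauss's identity: alternating sum of Gaussian binomials. -/
lemma gauss_alt (q : ℂ) (m : ℕ) :
    gA q (2*m) = ∏ k ∈ range m, (1 - q^(2*k+1)) ∧
    gB q (2*m) = ∏ k ∈ range m, (1 - q^(2*k+1)) := by
  induction m with
  | zero => constructor <;> simp [gA, gB, gb_zero_right]
  | succ m ih =>
    obtain ⟨hA, hB⟩ := ih
    have e1 : 2*(m+1) = (2*m+1)+1 := by ring
    have hAodd : gA q (2*m+1) = 0 := by rw [recA, hA, hB]; ring
    have hBodd : gB q (2*m+1) = (1 - q^(2*m+1)) * ∏ k ∈ range m, (1 - q^(2*k+1)) := by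
      rw [recB, hA, hB]; ring
    constructor
    · rw [e1, recA, hAodd, hBodd, Finset.prod_range_succ]; ring
    · rw [e1, recB, hAodd, hBodd, Finset.prod_range_succ]; ring

/-- triangular number as a sum -/
def tri (k : ℕ) : ℕ := ∑ i ∈ range (k+1), i

lemma tri_succ (k : ℕ) : tri (k+1) = tri k + (k+1) := Finset.sum_range_succ _ _

lemma tri_two (k : ℕ) : 2 * tri k = k * (k+1) := by
  induction k with
  | zero => rfl
  | succ k ih => rw [tri_succ, Nat.mul_add, ih]; ring

/-- step relation at a primitive (2M+1)-st root of unity -/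
lemma gb_root_step (ρ : ℂ) (M : ℕ) (h1 : ρ^(2*M+1) = 1)
    (hne : ∀ j, 0 < j → j < 2*M+1 → ρ^j ≠ 1) (k : ℕ) (hk : k + 1 ≤ 2*M) :
    gb ρ (2*M) k + ρ^(k+1) * gb ρ (2*M) (k+1) = 0 := by
  have p1 := gb_succ_succ ρ (2*M) k
  have p2 := gb_pascal2 ρ (2*M) k
  have hexp : ρ^(k+1) * ρ^(2*M - k) = 1 := by
    rw [← pow_add, show k+1+(2*M-k) = 2*M+1 by omega, h1]
  have hcancel : ρ^(k+1) ≠ 1 := hne (k+1) (by omega) (by omega)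
  have key : (ρ^(k+1) - 1) * (gb ρ (2*M) k + ρ^(k+1) * gb ρ (2*M) (k+1)) = 0 := by
    linear_combination -ρ^(k+1) * p1 + ρ^(k+1) * p2 + gb ρ (2*M) k * hexp
  rcases mul_eq_zero.mp key with h | h
  · exact absurd (by linear_combination h) hcancel
  · exact h

lemma gb_root_val (ρ : ℂ) (M : ℕ) (h1 : ρ^(2*M+1) = 1)
    (hne : ∀ j, 0 < j → j < 2*M+1 → ρ^j ≠ 1) :
    ∀ k, k ≤ 2*M → gb ρ (2*M) k * ρ^(tri k) = (-1)^k := by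
  intro k
  induction k with
  | zero => intro _; simp [gb_zero_right, tri]
  | succ k ih =>
    intro hk
    have hstep := gb_root_step ρ M h1 hne k hk
    have ihk := ih (by omega)
    rw [tri_succ, pow_add, pow_succ]
    linear_combination ρ^(tri k) * hstep - ihk

/-- Gauss's identity evaluated at a primitive (2M+1)-st root of unity. -/
lemma gauss_star (ρ : ℂ) (M : ℕ) (h1 : ρ^(2*M+1) = 1)
    (hne : ∀ j, 0 < j → j < 2*M+1 → ρ^j ≠ 1) :
    ∑ k ∈ range (2*M+1), (ρ⁻¹)^(tri k) = ∏ k ∈ range M, (1 - ρ^(2*k+1)) := by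
  rw [← (gauss_alt ρ M).1, gA]
  apply Finset.sum_congr rfl
  intro k hk
  have hk' : k ≤ 2*M := by have := Finset.mem_range.mp hk; omega
  have h := gb_root_val ρ M h1 hne k hk'
  have h2 : (-1:ℂ)^k * gb ρ (2*M) k * ρ^(tri k) = 1 := by
    rw [mul_assoc, h, ← mul_pow]
    norm_num
  rw [inv_pow]
  symm
  exact eq_inv_of_mul_eq_one_left (by linear_combination h2)

/-- For odd `N = 2M+1` and `q = e^{2πi/N}`:
`∑_{j=0}^{N-1} q^{j²} = q^{L²} ∏_{j=1}^{M}(1-q^j)` where `2L ≡ M (mod N)`. -/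
theorem gauss_sum_odd (M N : ℕ) (hN : N = 2 * M + 1)
    (q : ℂ) (hq : q = Complex.exp (2 * Real.pi * Complex.I / N))
    (L : ℤ) (hL : 2 * L ≡ (M : ℤ) [ZMOD (N : ℤ)]) :
    ∑ j ∈ Finset.range N, q ^ (j ^ 2) =
      q ^ (L ^ 2) * ∏ j ∈ Finset.Icc 1 M, (1 - q ^ j) := by
  haveI : NeZero N := ⟨by omega⟩
  have hNC : (N:ℂ) ≠ 0 := Nat.cast_ne_zero.mpr (by omega)
  -- basic facts about q
  have hqN : q ^ N = 1 := by
    rw [hq, ← Complex.exp_nat_mul]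
    have harg : (N:ℂ) * (2 * Real.pi * Complex.I / N) = 2 * Real.pi * Complex.I := by
      field_simp
    rw [harg, Complex.exp_two_pi_mul_I]
  have hdvd : ∀ m : ℕ, q ^ m = 1 → N ∣ m := by
    intro m hm
    rw [hq, ← Complex.exp_nat_mul] at hm
    obtain ⟨n, hn⟩ := Complex.exp_eq_one_iff.mp hm
    have h2 : (2 * (Real.pi:ℂ) * Complex.I) ≠ 0 := by
      simp [Real.pi_ne_zero, Complex.I_ne_zero]
    have hmn : (m:ℂ) = n * N := by
      field_simp at hn
      exact mul_right_cancel₀ h2 (by linear_combination (2 * (Real.pi:ℂ) * Complex.I) * hn)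
    have hmz : (m:ℤ) = n * N := by exact_mod_cast hmn
    have : (N:ℤ) ∣ (m:ℤ) := ⟨n, by linarith⟩
    exact_mod_cast this
  have hpowmod : ∀ a : ℕ, q^a = q^(a % N) := by
    intro a
    conv_lhs => rw [← Nat.div_add_mod a N]
    rw [pow_add, pow_mul, hqN, one_pow, one_mul]
  have hcong : ∀ a b : ℕ, ((a : ZMod N) = (b : ZMod N)) → q^a = q^b := by
    intro a b h
    rw [hpowmod a, hpowmod b]
    congr 1
    rwa [ZMod.natCast_eq_natCast_iff] at h
  -- the auxiliary root ρ = q^M is also a primitive N-th root of unity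
  have hcop : Nat.Coprime N M := by
    rw [hN]
    exact (Nat.coprime_mul_right_add_left 1 M 2).mpr (Nat.coprime_one_left M)
  set ρ : ℂ := q ^ M with hρ
  have hρN : ρ^(2*M+1) = 1 := by
    rw [hρ, ← pow_mul, show M*(2*M+1) = N*M by rw [hN]; ring, pow_mul, hqN, one_pow]
  have hρne : ∀ j, 0 < j → j < 2*M+1 → ρ^j ≠ 1 := by
    intro j hj hjN h
    rw [hρ, ← pow_mul] at h
    have hd : N ∣ M * j := hdvd _ h
    have : N ∣ j := Nat.Coprime.dvd_of_dvd_mul_left hcop hd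
    have := Nat.le_of_dvd hj this
    omega
  -- the star identity
  have hstar := gauss_star ρ M hρN hρne
  rw [show 2*M+1 = N from hN.symm] at hstar
  -- product side
  have hprod : ∏ k ∈ range M, (1 - ρ^(2*k+1)) = ∏ j ∈ Finset.Icc 1 M, (1 - q^j) := by
    refine Finset.prod_nbij' (fun k => M - k) (fun j => M - j) ?_ ?_ ?_ ?_ ?_
    · intro k hk
      simp only [Finset.mem_range] at hk
      simp only [Finset.mem_Icc]
      omega
    · intro j hj
      simp only [Finset.mem_Icc] at hj
      simp only [Finset.mem_range]
      omega
    · intro k hk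
      simp only [Finset.mem_range] at hk
      show M - (M - k) = k
      omega
    · intro j hj
      simp only [Finset.mem_Icc] at hj
      show M - (M - j) = j
      omega
    · intro k hk
      simp only [Finset.mem_range] at hk
      have : ρ^(2*k+1) = q^(M-k) := by
        rw [hρ, ← pow_mul]
        have he : M*(2*k+1) = N*k + (M-k) := by
          rw [hN]
          zify [show k ≤ M by omega]
          ring
        rw [he, pow_add, pow_mul, hqN, one_pow, one_mul]
      rw [this]
  -- ZMod N preliminaries
  have hN0 : ((N:ℕ) : ZMod N) = 0 := ZMod.natCast_self N
  have h2t : (2 : ZMod N) * ((M : ZMod N) + 1) = 1 := by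
    have h : ((2*M+1 : ℕ) : ZMod N) = 0 := by rw [← hN]; exact hN0
    push_cast at h
    linear_combination h
  have cancel4 : ∀ x y : ZMod N, 4*x = 4*y → x = y := by
    intro x y h
    have h4 : (4 : ZMod N) * ((M : ZMod N) + 1)^2 = 1 := by
      linear_combination (2*((M : ZMod N) + 1) + 1) * h2t
    linear_combination ((M : ZMod N) + 1)^2 * h - (x - y) * h4
  set l : ℕ := L.natAbs with hl
  have hL' : 2 * ((L : ZMod N)) = (M : ZMod N) := by
    have h := (ZMod.intCast_eq_intCast_iff _ _ _).mpr hL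
    push_cast at h
    linear_combination h
  have hlL : ((l : ℕ) : ZMod N)^2 = ((L : ℤ) : ZMod N)^2 := by
    have hc : ((l : ℕ) : ZMod N) = ((l : ℤ) : ZMod N) := by push_cast; rfl
    rw [hc]
    rcases Int.natAbs_eq L with h | h
    · rw [hl, ← h]
    · have h' : (l : ℤ) = -L := by rw [hl]; omega
      rw [h']
      push_cast
      ring
  have hl4 : 4 * ((l : ℕ) : ZMod N)^2 = ((M : ZMod N))^2 := by
    rw [hlL]
    linear_combination (2*((L : ZMod N)) + (M : ZMod N)) * hL'
  -- the affine bijection a ↦ (2a+1)(M+1)² on ZMod N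
  let e : ZMod N ≃ ZMod N :=
    { toFun := fun a => (2*a + 1) * ((M : ZMod N) + 1)^2
      invFun := fun b => (4*b - 1) * ((M : ZMod N) + 1)
      left_inv := by
        intro a
        simp only
        linear_combination (4*a*((M : ZMod N)+1)^2 + 2*((M : ZMod N)+1)^2
          + 2*a*((M : ZMod N)+1) + ((M : ZMod N)+1) + a) * h2t
      right_inv := by
        intro b
        simp only
        linear_combination (4*b*((M : ZMod N)+1)^2 - ((M : ZMod N)+1)^2
          + 2*b*((M : ZMod N)+1) + b) * h2t }
  -- transfer sums between range N and ZMod N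
  have uni : ∀ f : ZMod N → ℂ, ∑ a : ZMod N, f a = ∑ k ∈ range N, f (k : ZMod N) := by
    intro f
    refine Finset.sum_nbij' (fun (a : ZMod N) => a.val) (fun (k : ℕ) => (k : ZMod N))
      ?_ ?_ ?_ ?_ ?_
    · intro a _; exact Finset.mem_range.mpr a.val_lt
    · intro k _; exact Finset.mem_univ _
    · intro a _; exact ZMod.natCast_rightInverse a
    · intro k hk; exact ZMod.val_cast_of_lt (Finset.mem_range.mp hk)
    · intro a _
      rw [ZMod.natCast_rightInverse a]
  set f : ZMod N → ℂ := fun a => q ^ (a.val^2) with hf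
  have G_eq : ∑ j ∈ range N, q^(j^2) = ∑ a : ZMod N, f a := by
    rw [uni f]
    apply Finset.sum_congr rfl
    intro j hj
    rw [hf]
    simp only
    rw [ZMod.val_cast_of_lt (Finset.mem_range.mp hj)]
  -- inverse of ρ
  have hinv : ρ⁻¹ = q^(2*(M*M)) := by
    apply inv_eq_of_mul_eq_one_right
    rw [hρ, ← pow_add, show M + 2*(M*M) = N*M by rw [hN]; ring, pow_mul, hqN, one_pow]
  -- the key term identity
  have hterm : ∀ k ∈ range N, q^(l^2) * (ρ⁻¹)^(tri k) = f (e (k : ZMod N)) := by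
    intro k _
    rw [hinv, ← pow_mul, ← pow_add]
    have he : e ((k : ℕ) : ZMod N) = (2*((k : ℕ) : ZMod N) + 1) * ((M : ZMod N) + 1)^2 := rfl
    rw [hf]
    simp only
    apply hcong
    have htri : 2 * ((tri k : ℕ) : ZMod N)
        = ((k : ℕ) : ZMod N)^2 + ((k : ℕ) : ZMod N) := by
      have h := congrArg (Nat.cast : ℕ → ZMod N) (tri_two k)
      push_cast at h
      linear_combination h
    have hval : (((e ((k : ℕ) : ZMod N)).val : ℕ) : ZMod N) = e ((k : ℕ) : ZMod N) :=
      ZMod.natCast_rightInverse _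
    push_cast
    rw [hval, he]
    apply cancel4
    linear_combination (4*((M : ZMod N))^2) * htri + hl4
      + (-(2*((k : ℕ) : ZMod N)+1)^2 * (2*((M : ZMod N))^2 + 3*((M : ZMod N)) + 2)
        * (((M : ZMod N)) + 2)) * h2t
  -- assemble
  have key : q^(l^2) * (∑ k ∈ range N, (ρ⁻¹)^(tri k)) = ∑ j ∈ range N, q^(j^2) := by
    rw [Finset.mul_sum, Finset.sum_congr rfl hterm]
    calc ∑ k ∈ range N, f (e (k : ZMod N))
        = ∑ a : ZMod N, f (e a) := (uni (fun a => f (e a))).symm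
      _ = ∑ a : ZMod N, f a := Equiv.sum_comp e f
      _ = ∑ j ∈ range N, q^(j^2) := G_eq.symm
  have hzpow : q ^ (L^2) = q ^ (l^2) := by
    have h1 : L^2 = ((l^2 : ℕ) : ℤ) := by
      rcases Int.natAbs_eq L with h | h <;> (rw [hl]; nth_rewrite 1 [h]; push_cast; ring)
    rw [h1, zpow_natCast]
  rw [hzpow, ← hprod, ← hstar]
  exact key.symm
end

section
/- Let N = 2M+1 be odd, q^{1/2} = -e^{πi/N} (so q = e^{2πi/N}), and s a nonnegative integer with s < N/2. Then ∏_{j=1}^{s} (1 - q^{1-2j})/(1 + q^{M-s+2j}) = q^{-s(s+1)/4} · ∏_{j=0}^{s-1} (1 - q^{M-j}), where q^{1/4} is a fixed fourth root compatible with q^{1/2}. -/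
open Finset

private lemma shh_prod_zpow (w : ℂ) (hw0 : w ≠ 0) (s : Finset ℕ) (f : ℕ → ℤ) :
    ∏ j ∈ s, w ^ f j = w ^ (∑ j ∈ s, f j) := by
  classical
  induction s using Finset.induction with
  | empty => simp
  | insert _ _ h ih => rw [Finset.prod_insert h, Finset.sum_insert h, zpow_add₀ hw0, ih]

private lemma shh_sum (s : ℕ) :
    ∑ j ∈ Finset.range s, (2*(s:ℤ) - 3 - 4*(j:ℤ)) = -(s:ℤ) := by
  induction s with
  | zero => simp
  | succ n ih =>
    rw [Finset.sum_range_succ]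
    have h : ∀ j ∈ Finset.range n,
        (2*((n+1:ℕ):ℤ) - 3 - 4*(j:ℤ)) = (2*(n:ℤ) - 3 - 4*(j:ℤ)) + 2 := by
      intro j _; push_cast; ring
    rw [Finset.sum_congr rfl h, Finset.sum_add_distrib, ih]
    simp only [Finset.sum_const, Finset.card_range, smul_eq_mul]
    push_cast; ring

private lemma shh_refl (w : ℂ) (hw0 : w ≠ 0) (s : ℕ) :
    ∏ j ∈ Finset.range s, ((1:ℂ) + w ^ (4*(j:ℤ) + 1 - 2*(s:ℤ))) =
    w ^ (-(s:ℤ)) * ∏ j ∈ Finset.range s, ((1:ℂ) + w ^ (4*(j:ℤ) + 3 - 2*(s:ℤ))) := by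
  have h1 : ∏ j ∈ Finset.range s, ((1:ℂ) + w ^ (4*(j:ℤ) + 1 - 2*(s:ℤ)))
      = ∏ j ∈ Finset.range s, ((1:ℂ) + w ^ (2*(s:ℤ) - 3 - 4*(j:ℤ))) := by
    rw [← Finset.prod_range_reflect]
    refine Finset.prod_congr rfl fun j hj => ?_
    have hj' : j < s := Finset.mem_range.mp hj
    have hc : ((s - 1 - j : ℕ) : ℤ) = (s:ℤ) - 1 - j := by omega
    congr 1
    rw [hc]; ring
  have h2 : ∀ j ∈ Finset.range s, ((1:ℂ) + w ^ (2*(s:ℤ) - 3 - 4*(j:ℤ)))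
      = w ^ (2*(s:ℤ) - 3 - 4*(j:ℤ)) * ((1:ℂ) + w ^ (4*(j:ℤ) + 3 - 2*(s:ℤ))) := by
    intro j _
    rw [mul_add, mul_one, ← zpow_add₀ hw0,
      show (2*(s:ℤ) - 3 - 4*(j:ℤ)) + (4*(j:ℤ) + 3 - 2*(s:ℤ)) = 0 by ring, zpow_zero]
    ring
  rw [h1, Finset.prod_congr rfl h2, Finset.prod_mul_distrib,
    shh_prod_zpow w hw0, shh_sum]

private lemma shh_key (w v : ℂ) (hw0 : w ≠ 0) (hv : v ^ 2 = w) (s : ℕ) :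
    ∏ j ∈ Finset.range s, ((1:ℂ) - w ^ (-2 - 4*(j:ℤ))) =
    v ^ (-((s:ℤ) * ((s:ℤ) + 1))) *
      (∏ j ∈ Finset.range s, ((1:ℂ) - w ^ (-1 - 2*(j:ℤ)))) *
      ∏ j ∈ Finset.range s, ((1:ℂ) + w ^ (4*(j:ℤ) + 3 - 2*(s:ℤ))) := by
  have hv0 : v ≠ 0 := by
    intro h; apply hw0; rw [← hv, h]; ring
  induction s with
  | zero => simp
  | succ n ih =>
    set y := w ^ (n:ℤ) with hy
    have hy0 : y ≠ 0 := zpow_ne_zero _ hw0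
    have hD : ∏ j ∈ Finset.range (n+1), ((1:ℂ) + w ^ (4*(j:ℤ) + 3 - 2*((n+1:ℕ):ℤ)))
        = y⁻¹ * (∏ j ∈ Finset.range n, ((1:ℂ) + w ^ (4*(j:ℤ) + 3 - 2*(n:ℤ))))
            * (1 + w * y * y) := by
      rw [Finset.prod_range_succ]
      have he : ∀ j ∈ Finset.range n,
          ((1:ℂ) + w ^ (4*(j:ℤ) + 3 - 2*((n+1:ℕ):ℤ)))
            = (1 + w ^ (4*(j:ℤ) + 1 - 2*(n:ℤ))) := by
        intro j _
        rw [show (4*(j:ℤ) + 3 - 2*((n+1:ℕ):ℤ)) = 4*(j:ℤ) + 1 - 2*(n:ℤ) by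
          push_cast; ring]
      rw [Finset.prod_congr rfl he, shh_refl w hw0 n]
      have h1 : w ^ (4*(n:ℤ) + 3 - 2*((n+1:ℕ):ℤ)) = w * y * y := by
        rw [show (4*(n:ℤ) + 3 - 2*((n+1:ℕ):ℤ)) = 1 + n + n by push_cast; ring,
          zpow_add₀ hw0, zpow_add₀ hw0, zpow_one, hy]
      have h2 : w ^ (-(n:ℤ)) = y⁻¹ := by rw [zpow_neg, hy]
      rw [h1, h2]
    have hvp : v ^ (-(((n+1:ℕ):ℤ) * (((n+1:ℕ):ℤ) + 1)))
        = v ^ (-((n:ℤ) * ((n:ℤ) + 1))) * (w * y)⁻¹ := by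
      have hv2 : v ^ (2:ℤ) = w := by rw [← hv]; norm_cast
      have h1 : v ^ (-(((n+1:ℕ):ℤ) * (((n+1:ℕ):ℤ) + 1)))
          = v ^ (-((n:ℤ) * ((n:ℤ) + 1))) * (v ^ (2:ℤ)) ^ (-((n:ℤ)+1)) := by
        rw [← zpow_mul, ← zpow_add₀ hv0]
        congr 1; push_cast; ring
      have h2 : w ^ (-((n:ℤ)+1)) = (w * y)⁻¹ := by
        rw [zpow_neg]
        congr 1
        rw [zpow_add₀ hw0, zpow_one, hy]
        ring
      rw [h1, hv2, h2]
    rw [Finset.prod_range_succ, Finset.prod_range_succ, ih, hD, hvp]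
    have eA : w ^ (-2 - 4*(n:ℤ)) = (w * w * y * y * y * y)⁻¹ := by
      rw [show (-2 - 4*(n:ℤ)) = -(1 + 1 + n + n + n + n) by ring, zpow_neg]
      congr 1
      rw [zpow_add₀ hw0, zpow_add₀ hw0, zpow_add₀ hw0, zpow_add₀ hw0, zpow_add₀ hw0,
        zpow_one, hy]
    have eB : w ^ (-1 - 2*(n:ℤ)) = (w * y * y)⁻¹ := by
      rw [show (-1 - 2*(n:ℤ)) = -(1 + n + n) by ring, zpow_neg]
      congr 1
      rw [zpow_add₀ hw0, zpow_add₀ hw0, zpow_one, hy]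
    rw [eA, eB]
    have hsc : (1 : ℂ) - (w * w * y * y * y * y)⁻¹
        = (w * y)⁻¹ * (1 - (w * y * y)⁻¹) * (y⁻¹ * (1 + w * y * y)) := by
      have hA : w * w * y * y * y * y ≠ 0 :=
        mul_ne_zero (mul_ne_zero (mul_ne_zero (mul_ne_zero (mul_ne_zero hw0 hw0)
          hy0) hy0) hy0) hy0
      field_simp
      ring
    linear_combination (v ^ (-((n:ℤ) * ((n:ℤ) + 1))) *
      (∏ j ∈ Finset.range n, ((1:ℂ) - w ^ (-1 - 2*(j:ℤ)))) *
      (∏ j ∈ Finset.range n, ((1:ℂ) + w ^ (4*(j:ℤ) + 3 - 2*(n:ℤ))))) * hsc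

/-- Identity (shhide): for odd `N = 2M+1`, `q^{1/2} = -e^{πi/N}`, `q^{1/4} = v`
with `v² = q^{1/2}`, and `0 ≤ s < N/2`:
`∏_{j=1}^{s}(1-q^{1-2j})/(1+q^{M-s+2j}) = q^{-s(s+1)/4}·∏_{j=0}^{s-1}(1-q^{M-j})`. -/
theorem shhide_identity (M s N : ℕ) (hN : N = 2 * M + 1) (hs : 2 * s < N)
    (q2 v : ℂ) (hq2 : q2 = -Complex.exp (Real.pi * Complex.I / N))
    (hv : v ^ 2 = q2) :
    ∏ j ∈ Finset.Icc 1 s,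
        (1 - q2 ^ ((2 : ℤ) - 4 * j)) / (1 + q2 ^ (2 * ((M : ℤ) - s + 2 * j))) =
    v ^ (-((s : ℤ) * (s + 1))) *
      ∏ j ∈ Finset.range s, (1 - q2 ^ (2 * ((M : ℤ) - j))) := by
  have hNZ : (N:ℤ) = 2*(M:ℤ) + 1 := by exact_mod_cast hN
  have hN0 : (N:ℂ) ≠ 0 := by
    simp only [Ne, Nat.cast_eq_zero]; omega
  have hw0 : q2 ≠ 0 := by
    rw [hq2]; simpa using Complex.exp_ne_zero (Real.pi * Complex.I / N)
  -- q2 ^ N = 1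
  have hpow : q2 ^ N = 1 := by
    rw [hq2, neg_pow]
    have hexp : Complex.exp (Real.pi * Complex.I / N) ^ N = -1 := by
      rw [← Complex.exp_nat_mul]
      rw [show (N:ℂ) * (Real.pi * Complex.I / N) = Real.pi * Complex.I by
        field_simp]
      exact Complex.exp_pi_mul_I
    rw [hexp, Odd.neg_one_pow ⟨M, by omega⟩]
    ring
  have hz : q2 ^ (N:ℤ) = 1 := by rw [zpow_natCast, hpow]
  have hper : ∀ a : ℤ, q2 ^ (a + (N:ℤ)) = q2 ^ a := by
    intro a; rw [zpow_add₀ hw0, hz, mul_one]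
  have hne : ∀ k : ℤ, (1:ℂ) + q2 ^ k ≠ 0 := by
    intro k h
    have h1 : q2 ^ k = -1 := by linear_combination h
    have h2 : (q2 ^ k) ^ N = 1 := by
      rw [← zpow_natCast (q2 ^ k), ← zpow_mul, mul_comm, zpow_mul, hz, one_zpow]
    rw [h1, Odd.neg_one_pow ⟨M, by omega⟩] at h2
    exact absurd h2 (by norm_num)
  -- rewrite LHS
  have hIcc : Finset.Icc 1 s = Finset.Ico 1 (s+1) := (Finset.Ico_add_one_right_eq_Icc 1 s).symm
  rw [hIcc, Finset.prod_Ico_eq_prod_range]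
  simp only [Nat.add_sub_cancel]
  have hL : ∀ j ∈ Finset.range s,
      (1 - q2 ^ ((2:ℤ) - 4 * ((1+j:ℕ):ℤ))) /
        (1 + q2 ^ (2 * ((M:ℤ) - (s:ℤ) + 2 * ((1+j:ℕ):ℤ))))
      = (1 - q2 ^ (-2 - 4*(j:ℤ))) / (1 + q2 ^ (4*(j:ℤ) + 3 - 2*(s:ℤ))) := by
    intro j _
    congr 2
    · congr 1; push_cast; ring
    · rw [show 2 * ((M:ℤ) - (s:ℤ) + 2 * ((1+j:ℕ):ℤ))
          = (4*(j:ℤ) + 3 - 2*(s:ℤ)) + (N:ℤ) by rw [hNZ]; push_cast; ring, hper]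
  rw [Finset.prod_congr rfl hL, Finset.prod_div_distrib]
  -- rewrite RHS
  have hR : ∀ j ∈ Finset.range s,
      ((1:ℂ) - q2 ^ (2 * ((M:ℤ) - (j:ℤ))))
      = (1 - q2 ^ (-1 - 2*(j:ℤ))) := by
    intro j _
    rw [show 2 * ((M:ℤ) - (j:ℤ)) = (-1 - 2*(j:ℤ)) + (N:ℤ) by rw [hNZ]; ring, hper]
  rw [Finset.prod_congr rfl hR]
  have hD : (∏ j ∈ Finset.range s, ((1:ℂ) + q2 ^ (4*(j:ℤ) + 3 - 2*(s:ℤ)))) ≠ 0 :=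
    Finset.prod_ne_zero_iff.mpr (fun j _ => hne _)
  rw [div_eq_iff hD, shh_key q2 v hw0 hv s]
end
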